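/- Let E be a directed graph with vertex v_0 and n ≥ 1. The graph E(v_0,n)(E^0), obtained from E(v_0,n) by the source-replacement construction applied to the hereditary subset E^0, is isomorphic as a directed graph to E'(v_0,n), the graph obtained from E by adding n new vertices v_1,…,v_n each with a single edge e_i from v_i directly to v_0. -/

import Mathlib

/-- A directed graph: vertices, edges, source and range maps. -/
structure DGraph where
  V : Type
  E : Type
  s : E → V
  r : E → V

namespace DGraph

/-- One-step reachability: there is an edge from `v` to `w`. -/
def Step (G : DGraph) (v w : G.V) : Prop := ∃ e : G.E, G.s e = v ∧ G.r e = w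

/-- `Reaches G v w` means there is a directed path (possibly trivial) from `v` to `w`. -/
def Reaches (G : DGraph) : G.V → G.V → Prop := Relation.ReflTransGen G.Step

/-- A subset of vertices is hereditary if it is closed under reachability. -/
def Hereditary (G : DGraph) (H : Set G.V) : Prop :=
  ∀ v w : G.V, v ∈ H → G.Reaches v w → w ∈ H

end DGraph

/-- A (nontrivial, finite) directed path in a graph: a nonempty list of composable
edges. -/
structure DPath (G : DGraph) where
  edges : List G.E
  ne : edges ≠ []
  chain : edges.Chain' (fun e f => G.r e = G.s f)

namespace DPath

variable {G : DGraph}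

/-- The last edge of a path. -/
def lastE (p : DPath G) : G.E := p.edges.getLast p.ne

/-- The first edge of a path. -/
def headE (p : DPath G) : G.E := p.edges.head p.ne

/-- The source vertex of a path. -/
def first (p : DPath G) : G.V := G.s p.headE

/-- The range vertex of a path. -/
def last (p : DPath G) : G.V := G.r p.lastE

end DPath

/-- The set `F(H)` of paths `α = e₁ ⋯ eₙ` with `s(eₙ) ∉ H` and `r(eₙ) ∈ H`. -/
def FH (G : DGraph) (H : Set G.V) : Set (DPath G) :=
  {α : DPath G | G.s α.lastE ∉ H ∧ G.r α.lastE ∈ H}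

/-- The restricted graph on the complement of `H` is acyclic: there is no cycle all of
whose edges have source and range outside `H`. -/
def AcyclicOutside (G : DGraph) (H : Set G.V) : Prop :=
  ¬ ∃ p : DPath G, (∀ e ∈ p.edges, G.s e ∉ H ∧ G.r e ∉ H) ∧ p.first = p.last

/-- The source-replacement graph `G(H)` of a hereditary subset `H`: its vertices are
`H ∪ F(H)` and its edges are `s⁻¹(H)` together with one new edge `ᾱ` from each new
vertex `α ∈ F(H)` to `r(α) ∈ H`. -/
def sourceRepl (G : DGraph) (H : Set G.V)
    (hH : ∀ e : G.E, G.s e ∈ H → G.r e ∈ H) : DGraph where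
  V := {v : G.V // v ∈ H} ⊕ {α : DPath G // α ∈ FH G H}
  E := {e : G.E // G.s e ∈ H} ⊕ {α : DPath G // α ∈ FH G H}
  s := Sum.elim (fun e => Sum.inl ⟨G.s e.1, e.2⟩) (fun α => Sum.inr α)
  r := Sum.elim (fun e => Sum.inl ⟨G.r e.1, hH e.1 e.2⟩)
    (fun α => Sum.inl ⟨α.1.last, α.2.2⟩)

/-- The graph `E(v₀,n)`: attach a head `vₙ → ⋯ → v₁ → v₀` of length `n` at the vertex
`v₀`. -/
def headAttach (G : DGraph) (v0 : G.V) (n : ℕ) : DGraph where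
  V := G.V ⊕ Fin n
  E := G.E ⊕ Fin n
  s := Sum.elim (fun e => Sum.inl (G.s e)) (fun i => Sum.inr i)
  r := Sum.elim (fun e => Sum.inl (G.r e))
    (fun i => if h : (i : ℕ) = 0 then Sum.inl v0 else Sum.inr ⟨(i : ℕ) - 1, by omega⟩)

/-- The graph `E'(v₀,n)`: add `n` new vertices `v₁, …, vₙ`, each with a single edge
`eᵢ : vᵢ → v₀` directly to `v₀`. -/
def primeAttach (G : DGraph) (v0 : G.V) (n : ℕ) : DGraph where
  V := G.V ⊕ Fin n
  E := G.E ⊕ Fin n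
  s := Sum.elim (fun e => Sum.inl (G.s e)) (fun i => Sum.inr i)
  r := Sum.elim (fun e => Sum.inl (G.r e)) (fun _ => Sum.inl v0)

/-- An isomorphism of directed graphs: bijections on vertices and edges commuting with
the source and range maps. -/
structure DGraphIso (G G' : DGraph) where
  vEquiv : G.V ≃ G'.V
  eEquiv : G.E ≃ G'.E
  s_comm : ∀ e : G.E, G'.s (eEquiv e) = vEquiv (G.s e)
  r_comm : ∀ e : G.E, G'.r (eEquiv e) = vEquiv (G.r e)

namespace SRHelper

variable {G : DGraph} {v0 : G.V} {n : ℕ}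

lemma DPath.ext' {G : DGraph} {p q : DPath G} (h : p.edges = q.edges) : p = q := by
  cases p; cases q; cases h; rfl

lemma inr_not_mem (i : Fin n) :
    (Sum.inr i : (headAttach G v0 n).V) ∉
      Set.range (Sum.inl : G.V → (headAttach G v0 n).V) := by
  rintro ⟨w, hw⟩; exact (Sum.inl_ne_inr hw)

/-- Elementwise characterization of reversed chains starting at a head vertex. -/
lemma rev_char : ∀ (R : List (headAttach G v0 n).E),
    R.Chain' (fun f e => (headAttach G v0 n).r e = (headAttach G v0 n).s f) →
    ∀ (j : ℕ) (hj : j < n) (hne : R ≠ []), R.head hne = Sum.inr ⟨j, hj⟩ →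
    ∀ t (ht : t < R.length), ∃ h : j + t < n, R.get ⟨t, ht⟩ = Sum.inr ⟨j + t, h⟩ := by
  intro R
  induction R with
  | nil => intro _ j hj hne; exact absurd rfl hne
  | cons x R ih =>
    intro hc j hj hne hhead t ht
    have hx : x = Sum.inr ⟨j, hj⟩ := hhead
    match t with
    | 0 => exact ⟨by omega, by simpa using hx⟩
    | Nat.succ t' =>
      have htR : t' < R.length := by simpa using ht
      match R, htR with
      | y :: R', htR =>
        obtain ⟨hxy, hc'⟩ := List.isChain_cons_cons.mp hc
        rw [hx] at hxy
        -- hxy : r y = s (inr ⟨j, hj⟩) = inr ⟨j, hj⟩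
        have hy : ∃ hjn : j + 1 < n, y = Sum.inr ⟨j + 1, hjn⟩ := by
          match y with
          | Sum.inl f => simp [headAttach] at hxy
          | Sum.inr i =>
            by_cases hi : (i : ℕ) = 0
            · simp [headAttach, hi] at hxy
            · simp only [headAttach, Sum.elim_inr, dif_neg hi] at hxy
              have : (i : ℕ) - 1 = j :=
                congrArg Fin.val (Sum.inr_injective hxy)
              have hin : (i : ℕ) = j + 1 := by omega
              exact ⟨hin ▸ i.isLt, congrArg Sum.inr (Fin.ext hin)⟩
        obtain ⟨hjn, hy⟩ := hy
        obtain ⟨h2, hg⟩ := ih hc' (j + 1) hjn (List.cons_ne_nil _ _)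
          (by simpa using hy) t' htR
        refine ⟨by omega, ?_⟩
        simp only [List.get_cons_succ]
        rw [hg]
        exact congrArg Sum.inr (Fin.ext (show j + 1 + t' = j + (t' + 1) by omega))

lemma lastE_eq {α : DPath (headAttach G v0 n)}
    (hα : α ∈ FH (headAttach G v0 n)
      (Set.range (Sum.inl : G.V → (headAttach G v0 n).V))) :
    ∃ h0 : 0 < n, α.lastE = Sum.inr ⟨0, h0⟩ := by
  obtain ⟨hs, hr⟩ := hα
  match he : α.lastE with
  | Sum.inl f => exact absurd (he ▸ hs) (by simp [headAttach]; exact ⟨G.s f, rfl⟩)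
  | Sum.inr i =>
    rw [he] at hr
    by_cases hi : (i : ℕ) = 0
    · exact ⟨by omega, congrArg Sum.inr (Fin.ext hi)⟩
    · simp only [headAttach, Sum.elim_inr, dif_neg hi] at hr
      exact absurd hr (inr_not_mem _)

lemma edges_char {α : DPath (headAttach G v0 n)}
    (hα : α ∈ FH (headAttach G v0 n)
      (Set.range (Sum.inl : G.V → (headAttach G v0 n).V))) :
    ∀ t (ht : t < α.edges.reverse.length),
      ∃ h : t < n, α.edges.reverse.get ⟨t, ht⟩ = Sum.inr ⟨t, h⟩ := by
  obtain ⟨h0, hlast⟩ := lastE_eq hα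
  have hne : α.edges.reverse ≠ [] := by simp [α.ne]
  have hchain : α.edges.reverse.Chain'
      (fun f e => (headAttach G v0 n).r e = (headAttach G v0 n).s f) :=
    List.isChain_reverse.mpr α.chain
  have hhead : α.edges.reverse.head hne = Sum.inr ⟨0, h0⟩ := by
    rw [List.head_reverse]; exact hlast
  intro t ht
  obtain ⟨h, hg⟩ := rev_char _ hchain 0 h0 hne hhead t ht
  refine ⟨by omega, ?_⟩
  rw [hg]
  exact congrArg Sum.inr (Fin.ext (show 0 + t = t by omega))

/-- The canonical descending path `[inr k, inr (k-1), …, inr 0]`. -/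
def desc (G : DGraph) (v0 : G.V) (n : ℕ) : (k : ℕ) → k < n → List (headAttach G v0 n).E
  | 0, h => [Sum.inr ⟨0, h⟩]
  | k + 1, h => Sum.inr ⟨k + 1, h⟩ :: desc G v0 n k (by omega)

lemma desc_ne : ∀ (k : ℕ) (h : k < n), desc G v0 n k h ≠ []
  | 0, _ => by simp [desc]
  | k + 1, _ => by simp [desc]

lemma desc_length : ∀ (k : ℕ) (h : k < n), (desc G v0 n k h).length = k + 1
  | 0, _ => rfl
  | k + 1, h => by
    show (desc G v0 n k (by omega)).length + 1 = k + 1 + 1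
    rw [desc_length k]

lemma desc_head : ∀ (k : ℕ) (h : k < n),
    (desc G v0 n k h).head (desc_ne k h) = Sum.inr ⟨k, h⟩
  | 0, _ => rfl
  | k + 1, _ => rfl

lemma desc_getLast : ∀ (k : ℕ) (h : k < n),
    (desc G v0 n k h).getLast (desc_ne k h) = Sum.inr ⟨0, by omega⟩
  | 0, _ => rfl
  | k + 1, h => by
    show (Sum.inr ⟨k + 1, h⟩ :: desc G v0 n k (by omega)).getLast (by simp) = _
    exact (List.getLast_cons (desc_ne k (by omega))).trans (desc_getLast k (by omega))

lemma desc_chain : ∀ (k : ℕ) (h : k < n),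
    (desc G v0 n k h).Chain'
      (fun e f => (headAttach G v0 n).r e = (headAttach G v0 n).s f)
  | 0, _ => List.isChain_singleton _
  | k + 1, h => by
    have hch := desc_chain k (show k < n by omega)
    show (Sum.inr ⟨k + 1, h⟩ :: desc G v0 n k (by omega)).Chain' _
    rcases hd : desc G v0 n k (by omega : k < n) with _ | ⟨y, R⟩
    · exact absurd hd (desc_ne k _)
    · rw [hd] at hch
      refine List.isChain_cons_cons.mpr ⟨?_, hch⟩
      have hy : y = Sum.inr ⟨k, by omega⟩ := by
        have h1 : (desc G v0 n k (by omega)).head? = some (Sum.inr ⟨k, by omega⟩) := by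
          rw [List.head?_eq_head (desc_ne k (by omega)),
            desc_head (G := G) (v0 := v0) k (by omega)]
          rfl
        rw [hd] at h1
        exact (Option.some_inj.mp h1.symm).symm
      rw [hy]
      simp [headAttach]

/-- The canonical descending path as a `DPath`, member of `FH`. -/
def descPath (G : DGraph) (v0 : G.V) (n : ℕ) (k : ℕ) (h : k < n) :
    DPath (headAttach G v0 n) :=
  ⟨desc G v0 n k h, desc_ne k h, desc_chain k h⟩

lemma descPath_mem (k : ℕ) (h : k < n) :
    descPath G v0 n k h ∈ FH (headAttach G v0 n)
      (Set.range (Sum.inl : G.V → (headAttach G v0 n).V)) := by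
  have hl : (descPath G v0 n k h).lastE
      = Sum.inr ⟨0, Nat.lt_of_le_of_lt (Nat.zero_le k) h⟩ :=
    desc_getLast (G := G) (v0 := v0) k h
  constructor
  · rw [hl]; exact inr_not_mem _
  · rw [hl]; exact ⟨v0, by simp [headAttach]⟩

end SRHelper

/-- The graph `E(v₀,n)(E⁰)`, obtained from `E(v₀,n)` by source replacement along the
hereditary subset `E⁰`, is isomorphic as a directed graph to `E'(v₀,n)`. -/
theorem sourceRepl_headAttach_iso_primeAttach (G : DGraph) (v0 : G.V) (n : ℕ)
    (hn : 1 ≤ n)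
    (hH : ∀ e : (headAttach G v0 n).E,
      (headAttach G v0 n).s e ∈ Set.range (Sum.inl : G.V → (headAttach G v0 n).V) →
      (headAttach G v0 n).r e ∈ Set.range (Sum.inl : G.V → (headAttach G v0 n).V)) :
    Nonempty (DGraphIso
      (sourceRepl (headAttach G v0 n)
        (Set.range (Sum.inl : G.V → (headAttach G v0 n).V)) hH)
      (primeAttach G v0 n)) := by
  classical
  set H := Set.range (Sum.inl : G.V → (headAttach G v0 n).V) with hHdef
  -- the equivalence on the `FH` part
  have hlen_pos : ∀ α : DPath (headAttach G v0 n), 0 < α.edges.length := fun α =>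
    List.length_pos_iff.mpr α.ne
  let fFH : {α : DPath (headAttach G v0 n) // α ∈ FH (headAttach G v0 n) H} → Fin n :=
    fun a => ⟨a.1.edges.length - 1, by
      obtain ⟨h, _⟩ := SRHelper.edges_char a.2 (a.1.edges.length - 1)
        (by simp; have := hlen_pos a.1; omega)
      exact h⟩
  have fFH_bij : Function.Bijective fFH := by
    constructor
    · rintro ⟨α, hα⟩ ⟨β, hβ⟩ hfe
      have hle : α.edges.length = β.edges.length := by
        have h1 := hlen_pos α
        have h2 := hlen_pos β
        have hv : α.edges.length - 1 = β.edges.length - 1 := congrArg Fin.val hfe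
        omega
      have hrev : α.edges.reverse = β.edges.reverse := by
        apply List.ext_get (by simp [hle])
        intro t ht1 ht2
        obtain ⟨ha, hga⟩ := SRHelper.edges_char hα t ht1
        obtain ⟨hb, hgb⟩ := SRHelper.edges_char hβ t ht2
        rw [hga, hgb]
      have : α.edges = β.edges := by
        have := congrArg List.reverse hrev
        simpa using this
      exact Subtype.ext (SRHelper.DPath.ext' this)
    · intro k
      refine ⟨⟨SRHelper.descPath G v0 n k.1 k.2, SRHelper.descPath_mem k.1 k.2⟩, ?_⟩
      simp only [fFH, SRHelper.descPath]
      exact Fin.ext (by simp [SRHelper.desc_length])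
  let eF := Equiv.ofBijective fFH fFH_bij
  -- the equivalence on vertex subtype
  let vE : G.V ≃ {v : (headAttach G v0 n).V // v ∈ H} :=
    Equiv.ofInjective (Sum.inl : G.V → (headAttach G v0 n).V) Sum.inl_injective
  have vE_symm : ∀ (v : G.V) (hv : Sum.inl v ∈ H), vE.symm ⟨Sum.inl v, hv⟩ = v := by
    intro v hv
    have : vE v = ⟨Sum.inl v, hv⟩ := Subtype.ext rfl
    rw [← this, Equiv.symm_apply_apply]
  -- the equivalence on edge subtype
  let edgeE : {e : (headAttach G v0 n).E // (headAttach G v0 n).s e ∈ H} ≃ G.E :=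
    { toFun := fun e => match e with
        | ⟨Sum.inl f, _⟩ => f
        | ⟨Sum.inr i, h⟩ => absurd h (SRHelper.inr_not_mem i)
      invFun := fun f => ⟨Sum.inl f, ⟨G.s f, rfl⟩⟩
      left_inv := by
        rintro ⟨e, he⟩
        match e, he with
        | Sum.inl f, he => rfl
        | Sum.inr i, he => exact absurd he (SRHelper.inr_not_mem i)
      right_inv := fun f => rfl }
  refine ⟨⟨Equiv.sumCongr vE.symm eF, Equiv.sumCongr edgeE eF, ?_, ?_⟩⟩
  · rintro (⟨e, he⟩ | ⟨α, hα⟩)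
    · match e, he with
      | Sum.inl f, he =>
        show Sum.inl (G.s f) = Sum.inl (vE.symm ⟨Sum.inl (G.s f), he⟩)
        exact congrArg Sum.inl (vE_symm _ _).symm
      | Sum.inr i, he => exact absurd he (SRHelper.inr_not_mem i)
    · rfl
  · rintro (⟨e, he⟩ | ⟨α, hα⟩)
    · match e, he with
      | Sum.inl f, he =>
        show Sum.inl (G.r f) = Sum.inl (vE.symm ⟨Sum.inl (G.r f), _⟩)
        exact congrArg Sum.inl (vE_symm _ _).symm
      | Sum.inr i, he => exact absurd he (SRHelper.inr_not_mem i)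
    · -- range of the new edge `ᾱ`
      show Sum.inl v0 = Sum.inl (vE.symm ⟨α.last, hα.2⟩)
      obtain ⟨h0, hlast⟩ := SRHelper.lastE_eq hα
      have hαlast : α.last = Sum.inl v0 := by
        unfold DPath.last; rw [hlast]; rfl
      rw [show (⟨α.last, hα.2⟩ : {v : (headAttach G v0 n).V // v ∈ H})
            = ⟨Sum.inl v0, ⟨v0, rfl⟩⟩ from Subtype.ext hαlast]
      exact congrArg Sum.inl (vE_symm _ _).symm
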